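/- Recurrence convergence (deterministic core of the sufficiency direction of Theorem 1 and Lemma 7): let z ≥ 0 and let η : ℕ → ℝ and A : ℕ → ℝ satisfy A_t ≥ 0, 0 < η_t ≤ 2 for all t, η_t → 0 as t → ∞, Σ_{t=1}^{∞} η_t = ∞, and A_{t+1} ≤ (1 − η_t/2)·A_t + z·η_t² for all t. Then A_t → 0 as t → ∞. -/

import Mathlib

/-- Recurrence convergence (deterministic core of the sufficiency direction of
Theorem 1 and Lemma 7): if `A (t+1) ≤ (1 - η t / 2) * A t + z * η t ^ 2` with
nonnegative `A`, step sizes `0 < η t ≤ 2` tending to `0` with divergent series,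
then `A t → 0`. -/
theorem recurrence_convergence (z : ℝ) (hz : 0 ≤ z) (η A : ℕ → ℝ)
    (hA : ∀ t, 0 ≤ A t)
    (hη : ∀ t, 0 < η t ∧ η t ≤ 2)
    (hη0 : Filter.Tendsto η Filter.atTop (nhds 0))
    (hdiv : Filter.Tendsto (fun n => ∑ t ∈ Finset.range n, η t)
      Filter.atTop Filter.atTop)
    (hrec : ∀ t, A (t + 1) ≤ (1 - η t / 2) * A t + z * η t ^ 2) :
    Filter.Tendsto A Filter.atTop (nhds 0) := by
  rw [Metric.tendsto_atTop]
  intro ε hε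
  set B : ℝ := ε / 2 with hBdef
  have hBpos : 0 < B := by positivity
  set δ : ℝ := B / (4 * (z + 1)) with hδdef
  have hδpos : 0 < δ := by positivity
  have hzδ : z * δ ≤ B / 4 := by
    rw [hδdef, mul_div_assoc', div_le_div_iff₀ (by positivity) (by norm_num)]
    nlinarith
  obtain ⟨T, hT⟩ : ∃ T, ∀ t ≥ T, η t ≤ δ := by
    have h := hη0.eventually (gt_mem_nhds hδpos)
    rw [Filter.eventually_atTop] at h
    obtain ⟨T, hT⟩ := h
    exact ⟨T, fun t ht => (hT t ht).le⟩
  -- step bound for t ≥ T with A t > B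
  have hdrop : ∀ t ≥ T, B < A t → A (t + 1) ≤ A t - η t * (B / 4) := by
    intro t ht hAt
    have hηt := hη t
    have hηδ := hT t ht
    have h1 : z * η t ^ 2 ≤ η t * (B / 4) := by
      have : z * η t ≤ B / 4 := le_trans (by nlinarith [hηt.1]) hzδ
      nlinarith [hηt.1]
    have h2 : η t / 2 * B ≤ η t / 2 * A t := by nlinarith [hηt.1]
    have := hrec t
    nlinarith
  -- invariant for t ≥ T
  have hstay : ∀ t ≥ T, A t ≤ B → A (t + 1) ≤ B := by
    intro t ht hAt
    have hηt := hη t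
    have hηδ := hT t ht
    have h1 : z * η t ^ 2 ≤ η t * (B / 4) := by
      have : z * η t ≤ B / 4 := le_trans (by nlinarith [hηt.1]) hzδ
      nlinarith [hηt.1]
    have h2 : (1 - η t / 2) * A t ≤ (1 - η t / 2) * B := by
      apply mul_le_mul_of_nonneg_left hAt
      linarith [hηt.2]
    have := hrec t
    nlinarith [hηt.1]
  -- existence of some t₀ ≥ T with A t₀ ≤ B
  obtain ⟨t₀, ht₀T, ht₀⟩ : ∃ t₀ ≥ T, A t₀ ≤ B := by
    by_contra h
    push_neg at h
    have hbig : ∀ t ≥ T, B < A t := fun t ht => h t ht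
    have hsum : ∀ n, A (T + n) ≤ A T - (∑ i ∈ Finset.range n, η (T + i)) * (B / 4) := by
      intro n
      induction n with
      | zero => simp
      | succ n ih =>
        have hTn : T ≤ T + n := Nat.le_add_right _ _
        have := hdrop (T + n) hTn (hbig _ hTn)
        rw [Finset.sum_range_succ]
        have : A (T + (n + 1)) ≤ A (T + n) - η (T + n) * (B / 4) := by
          rw [show T + (n + 1) = T + n + 1 from rfl]; exact this
        nlinarith
    -- ∑ i ∈ range n, η (T+i) → ∞
    have hdiv2 : Filter.Tendsto (fun n => ∑ i ∈ Finset.range n, η (T + i))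
        Filter.atTop Filter.atTop := by
      have h0 : Filter.Tendsto (fun n : ℕ => T + n) Filter.atTop Filter.atTop := by
        simpa [Nat.add_comm] using Filter.tendsto_add_atTop_nat T
      have h1 : Filter.Tendsto (fun n => ∑ t ∈ Finset.range (T + n), η t)
          Filter.atTop Filter.atTop := hdiv.comp h0
      have h2 : ∀ n, ∑ i ∈ Finset.range n, η (T + i)
          = (∑ t ∈ Finset.range (T + n), η t) - ∑ t ∈ Finset.range T, η t := by
        intro n
        rw [Finset.sum_range_add]
        ring
      simp only [h2]
      exact Filter.tendsto_atTop_add_const_right _ _ h1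
    obtain ⟨n, hn⟩ := (hdiv2.eventually_ge_atTop ((A T + 1) / (B / 4) + 1)).exists
    have hApos := hA (T + n)
    have := hsum n
    have hBq : (0:ℝ) < B / 4 := by positivity
    have hq : (A T + 1) / (B / 4) * (B / 4) = A T + 1 :=
      div_mul_cancel₀ _ (ne_of_gt hBq)
    nlinarith [mul_le_mul_of_nonneg_right hn hBq.le]
  -- A stays below B
  have hle : ∀ t ≥ t₀, A t ≤ B := by
    intro t ht
    induction t, ht using Nat.le_induction with
    | base => exact ht₀
    | succ n hn ih => exact hstay n (le_trans ht₀T hn) ih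
  refine ⟨t₀, fun n hn => ?_⟩
  rw [Real.dist_eq, sub_zero, abs_of_nonneg (hA n)]
  calc A n ≤ B := hle n hn
  _ < ε := by rw [hBdef]; linarith
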